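/- Let T ∈ ℤ⁺ and let r be any SOIRE over a finite alphabet Σ with |r| ≤ T. Then there exists a faithful encoding θ with length T such that Enc2Pre(θ) = PreForm(r). -/

import Mathlib

/-- Regular expressions with interleaving, RE(&). -/
inductive RE (α : Type) : Type where
  | sym : α → RE α
  | opt : RE α → RE α
  | star : RE α → RE α
  | plus : RE α → RE α
  | cat : RE α → RE α → RE α
  | inter : RE α → RE α → RE α
  | alt : RE α → RE α → RE α

/-- `Shuffle s₁ s₂ s` : `s` is a shuffle (interleaving) of `s₁` and `s₂`. -/
inductive Shuffle {α : Type} : List α → List α → List α → Prop where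
  | nil : Shuffle [] [] []
  | left {a : α} {s₁ s₂ s : List α} : Shuffle s₁ s₂ s → Shuffle (a :: s₁) s₂ (a :: s)
  | right {a : α} {s₁ s₂ s : List α} : Shuffle s₁ s₂ s → Shuffle s₁ (a :: s₂) (a :: s)

/-- The matching relation `r ⊨ s`. -/
inductive Matches {α : Type} : RE α → List α → Prop where
  | sym (a : α) : Matches (RE.sym a) [a]
  | optEps (r : RE α) : Matches (RE.opt r) []
  | opt {r : RE α} {s : List α} : Matches r s → Matches (RE.opt r) s
  | starEps (r : RE α) : Matches (RE.star r) []
  | starStep {r : RE α} {s₁ s₂ : List α} : s₂ ≠ [] → Matches (RE.star r) s₁ →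
      Matches r s₂ → Matches (RE.star r) (s₁ ++ s₂)
  | plus {r : RE α} {s₁ s₂ : List α} : Matches (RE.star r) s₁ → Matches r s₂ →
      Matches (RE.plus r) (s₁ ++ s₂)
  | cat {r₁ r₂ : RE α} {s₁ s₂ : List α} : Matches r₁ s₁ → Matches r₂ s₂ →
      Matches (RE.cat r₁ r₂) (s₁ ++ s₂)
  | inter {r₁ r₂ : RE α} {s₁ s₂ s : List α} : Shuffle s₁ s₂ s → Matches r₁ s₁ →
      Matches r₂ s₂ → Matches (RE.inter r₁ r₂) s
  | altLeft {r₁ r₂ : RE α} {s : List α} : Matches r₁ s → Matches (RE.alt r₁ r₂) s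
  | altRight {r₁ r₂ : RE α} {s : List α} : Matches r₂ s → Matches (RE.alt r₁ r₂) s

/-- The list of symbol occurrences of a RE(&). -/
def RE.symList {α : Type} : RE α → List α
  | .sym a => [a]
  | .opt r => r.symList
  | .star r => r.symList
  | .plus r => r.symList
  | .cat r₁ r₂ => r₁.symList ++ r₂.symList
  | .inter r₁ r₂ => r₁.symList ++ r₂.symList
  | .alt r₁ r₂ => r₁.symList ++ r₂.symList

/-- A SOIRE is a RE(&) in which every symbol occurs at most once. -/
def SOIRE {α : Type} (r : RE α) : Prop := r.symList.Nodup

/-- `α(r)` : the set of symbols occurring in `r`. -/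
def RE.alpha {α : Type} [DecidableEq α] : RE α → Finset α
  | .sym a => {a}
  | .opt r => r.alpha
  | .star r => r.alpha
  | .plus r => r.alpha
  | .cat r₁ r₂ => r₁.alpha ∪ r₂.alpha
  | .inter r₁ r₂ => r₁.alpha ∪ r₂.alpha
  | .alt r₁ r₂ => r₁.alpha ∪ r₂.alpha

/-- `filter(s, V)` : the subsequence of `s` of entries lying in `V`. -/
def filt {α : Type} [DecidableEq α] (s : List α) (V : Finset α) : List α :=
  s.filter (fun a => decide (a ∈ V))

/-- Tokens of the prefix notation: symbols and the six operators. -/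
inductive Tok (α : Type) : Type where
  | sym : α → Tok α
  | opt : Tok α
  | star : Tok α
  | plus : Tok α
  | cat : Tok α
  | inter : Tok α
  | alt : Tok α

/-- `PreForm(r)` : the prefix notation of `r` (preorder traversal of its syntax tree). -/
def RE.preForm {α : Type} : RE α → List (Tok α)
  | .sym a => [Tok.sym a]
  | .opt r => Tok.opt :: r.preForm
  | .star r => Tok.star :: r.preForm
  | .plus r => Tok.plus :: r.preForm
  | .cat r₁ r₂ => Tok.cat :: (r₁.preForm ++ r₂.preForm)
  | .inter r₁ r₂ => Tok.inter :: (r₁.preForm ++ r₂.preForm)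
  | .alt r₁ r₂ => Tok.alt :: (r₁.preForm ++ r₂.preForm)

/-- The size `|r|` of a RE(&): the length of its prefix notation. -/
def RE.size {α : Type} (r : RE α) : ℕ := r.preForm.length

/-- Whether a token is a symbol of the alphabet. -/
def Tok.isSym {α : Type} : Tok α → Bool
  | .sym _ => true
  | _ => false

/-- Whether a token is a binary operator (`·`, `&` or `|`). -/
def Tok.isBin {α : Type} : Tok α → Bool
  | .cat => true
  | .inter => true
  | .alt => true
  | _ => false

/-- `𝟙[o ∈ Σ] − 𝟙[o ∈ {·, &, |}]` for a token `o`. -/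
def Tok.val {α : Type} (o : Tok α) : ℤ :=
  (if o.isSym then 1 else 0) - (if o.isBin then 1 else 0)

/-- The set `B = Σ ∪ {?, *, +, ·, &, |, none}` indexing the entries of `wᵗ`. -/
inductive BSym (α : Type) : Type where
  | sym : α → BSym α
  | opt : BSym α
  | star : BSym α
  | plus : BSym α
  | cat : BSym α
  | inter : BSym α
  | alt : BSym α
  | none : BSym α

/-- Embedding of prefix-notation tokens into `B`. -/
def Tok.toB {α : Type} : Tok α → BSym α
  | .sym a => .sym a
  | .opt => .opt
  | .star => .star
  | .plus => .plus
  | .cat => .cat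
  | .inter => .inter
  | .alt => .alt

/-- An encoding `θ = (w, u)` with length `T`.  Vertex `t ∈ {1,…,T}` is represented by
the index `⟨t−1, _⟩ : Fin T`; `uᵗ_{t'}` vanishes unless `t + 2 ≤ t' ≤ T`. -/
structure Encoding (α : Type) (T : ℕ) : Type where
  w : Fin T → BSym α → ℝ
  u : Fin T → Fin T → ℝ
  w_mem : ∀ t a, w t a ∈ Set.Icc (0 : ℝ) 1
  u_mem : ∀ t t', u t t' ∈ Set.Icc (0 : ℝ) 1
  u_zero : ∀ t t' : Fin T, t'.val < t.val + 2 → u t t' = 0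

/-- A `[0,1]`-valued function is one-hot: value `1` at exactly one point, `0` elsewhere. -/
def OneHotFn {β : Type} (f : β → ℝ) : Prop :=
  ∃ b, f b = 1 ∧ ∀ b', b' ≠ b → f b' = 0

/-- Faithful encodings (Definition 3): conditions (1)–(7). -/
def Faithful {α : Type} [Fintype α] {T : ℕ} (θ : Encoding α T) : Prop :=
  -- (1) each `wᵗ` is one-hot
  (∀ t, OneHotFn (θ.w t)) ∧
  -- (2) each `uᵗ` is one-hot or all-zero
  (∀ t, (∀ t', θ.u t t' = 0) ∨ OneHotFn (θ.u t)) ∧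
  -- (3) `Σ_{t'} uᵗ_{t'} + Σ_{a ∈ Σ∪{?,*,+,none}} wᵗ_a = 1`
  (∀ t, (∑ t', θ.u t t') +
      ((∑ a : α, θ.w t (BSym.sym a)) + θ.w t BSym.opt + θ.w t BSym.star +
        θ.w t BSym.plus + θ.w t BSym.none) = 1) ∧
  -- (4) `w^{t+1}_none ≥ wᵗ_none`
  (∀ t t' : Fin T, t.val + 1 = t'.val → θ.w t BSym.none ≤ θ.w t' BSym.none) ∧
  -- (5) `Σ_{a ∈ {?,+,*,·,&,|}} w^{t−1}_a + Σ_{t'=1}^{t−2} u^{t'}_t + wᵗ_none = 1`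
  (∀ t t' : Fin T, t.val + 1 = t'.val →
      (θ.w t BSym.opt + θ.w t BSym.plus + θ.w t BSym.star +
        θ.w t BSym.cat + θ.w t BSym.inter + θ.w t BSym.alt) +
      (∑ p, θ.u p t') + θ.w t' BSym.none = 1) ∧
  -- (6) `(t−1−p)·uᵖ_t + Σ_{p'=p+1}^{t−1} Σ_{t'=t+1}^{T} u^{p'}_{t'} ≤ t−1−p`
  (∀ t p : Fin T, p.val + 2 ≤ t.val →
      ((t.val : ℝ) - p.val - 1) * θ.u p t +
        ∑ p' ∈ Finset.univ.filter (fun p' : Fin T => p.val < p'.val ∧ p'.val < t.val),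
          ∑ t' ∈ Finset.univ.filter (fun t' : Fin T => t.val < t'.val), θ.u p' t'
        ≤ (t.val : ℝ) - p.val - 1) ∧
  -- (7) `Σ_t wᵗ_a ≤ 1` for each symbol `a`
  (∀ a : α, (∑ t, θ.w t (BSym.sym a)) ≤ 1)

/-- `Enc2Pre(θ) = os` : the decoded sequence of `θ` is `os`, i.e. position `t` of `θ`
carries (with weight `1`) the `t`-th token of `os` for `t ≤ |os|`, and the `none`
operator beyond. -/
def DecodesTo {α : Type} {T : ℕ} (θ : Encoding α T) (os : List (Tok α)) : Prop :=
  os.length ≤ T ∧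
  (∀ (t : Fin T) (h : t.val < os.length), θ.w t (os.get ⟨t.val, h⟩).toB = 1) ∧
  (∀ t : Fin T, os.length ≤ t.val → θ.w t BSym.none = 1)


namespace SoireAux

variable {α : Type}

@[simp] lemma size_sym (a : α) : (RE.sym a).size = 1 := rfl
@[simp] lemma size_opt (r : RE α) : (RE.opt r).size = r.size + 1 := by
  simp [RE.size, RE.preForm]
@[simp] lemma size_star (r : RE α) : (RE.star r).size = r.size + 1 := by
  simp [RE.size, RE.preForm]
@[simp] lemma size_plus (r : RE α) : (RE.plus r).size = r.size + 1 := by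
  simp [RE.size, RE.preForm]
@[simp] lemma size_cat (r₁ r₂ : RE α) : (RE.cat r₁ r₂).size = r₁.size + r₂.size + 1 := by
  simp [RE.size, RE.preForm]
@[simp] lemma size_inter (r₁ r₂ : RE α) : (RE.inter r₁ r₂).size = r₁.size + r₂.size + 1 := by
  simp [RE.size, RE.preForm]
@[simp] lemma size_alt (r₁ r₂ : RE α) : (RE.alt r₁ r₂).size = r₁.size + r₂.size + 1 := by
  simp [RE.size, RE.preForm]

lemma size_pos (r : RE α) : 0 < r.size := by
  induction r <;> simp_all

lemma length_preForm (r : RE α) : r.preForm.length = r.size := rfl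

lemma getIdx {β : Type} {l : List β} {i j : ℕ} (hij : i = j) {hi : i < l.length} :
    l[i]'hi = l[j]'(hij ▸ hi) := by subst hij; rfl

/-- The set of "second-child" edges of the syntax tree of `r`, laid out at offset `o`. -/
def edges : RE α → ℕ → List (ℕ × ℕ)
  | .sym _, _ => []
  | .opt r, o => edges r (o+1)
  | .star r, o => edges r (o+1)
  | .plus r, o => edges r (o+1)
  | .cat r₁ r₂, o => (o, o + 1 + r₁.size) :: (edges r₁ (o+1) ++ edges r₂ (o + 1 + r₁.size))
  | .inter r₁ r₂, o => (o, o + 1 + r₁.size) :: (edges r₁ (o+1) ++ edges r₂ (o + 1 + r₁.size))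
  | .alt r₁ r₂, o => (o, o + 1 + r₁.size) :: (edges r₁ (o+1) ++ edges r₂ (o + 1 + r₁.size))

lemma edges_bounds : ∀ (r : RE α) (o p t : ℕ), (p, t) ∈ edges r o →
    o ≤ p ∧ p + 2 ≤ t ∧ t < o + r.size := by
  intro r
  induction r with
  | sym a => intro o p t h; simp [edges] at h
  | opt r ih | star r ih | plus r ih =>
      intro o p t h
      have := ih (o+1) p t h
      simp only [size_opt, size_star, size_plus]; omega
  | cat r₁ r₂ ih₁ ih₂ | inter r₁ r₂ ih₁ ih₂ | alt r₁ r₂ ih₁ ih₂ =>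
      intro o p t h
      have h1 := size_pos r₁
      have h2 := size_pos r₂
      simp only [edges, List.mem_cons, List.mem_append, Prod.mk.injEq] at h
      simp only [size_cat, size_inter, size_alt]
      rcases h with ⟨hp, ht⟩ | h | h
      · omega
      · have := ih₁ (o+1) p t h; omega
      · have := ih₂ (o+1+r₁.size) p t h; omega

lemma getLast_isSym : ∀ (r : RE α) (h : r.preForm ≠ []), (r.preForm.getLast h).isSym = true := by
  intro r
  induction r with
  | sym a => intro h; simp [RE.preForm, Tok.isSym]
  | opt r ih | star r ih | plus r ih =>
      intro h
      have hne : r.preForm ≠ [] := by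
        have := size_pos r; rw [← length_preForm] at this
        exact List.ne_nil_of_length_pos this
      simp only [RE.preForm, List.getLast_cons hne]
      exact ih hne
  | cat r₁ r₂ ih₁ ih₂ | inter r₁ r₂ ih₁ ih₂ | alt r₁ r₂ ih₁ ih₂ =>
      intro h
      have hne₂ : r₂.preForm ≠ [] := by
        have := size_pos r₂; rw [← length_preForm] at this
        exact List.ne_nil_of_length_pos this
      have hne : r₁.preForm ++ r₂.preForm ≠ [] := by
        simp [hne₂]
      simp only [RE.preForm, List.getLast_cons hne, List.getLast_append_of_ne_nil hne hne₂]
      exact ih₂ hne₂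

lemma last_isSym (r : RE α) (k : ℕ) (hk : k + 1 = r.size) :
    ∃ h : k < r.preForm.length, (r.preForm[k]).isSym = true := by
  have hlen : r.preForm.length = r.size := length_preForm r
  have h : k < r.preForm.length := by omega
  have hne : r.preForm ≠ [] := List.ne_nil_of_length_pos (by omega)
  refine ⟨h, ?_⟩
  have := getLast_isSym r hne
  rw [List.getLast_eq_getElem] at this
  have he : r.preForm[k] = r.preForm[r.preForm.length - 1]'(by omega) := by
    congr 1; omega
  rw [he]; exact this

lemma edges_src : ∀ (r : RE α) (o p t : ℕ), (p, t) ∈ edges r o →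
    ∃ (k : ℕ) (h : k < r.preForm.length), p = o + k ∧ (r.preForm[k]).isBin = true := by
  intro r
  induction r with
  | sym a => intro o p t h; simp [edges] at h
  | opt r ih | star r ih | plus r ih =>
      intro o p t h
      obtain ⟨k, hk, hp, hs⟩ := ih (o+1) p t h
      refine ⟨k+1, by simp [RE.preForm]; omega, by omega, ?_⟩
      simpa [RE.preForm] using hs
  | cat r₁ r₂ ih₁ ih₂ | inter r₁ r₂ ih₁ ih₂ | alt r₁ r₂ ih₁ ih₂ =>
      intro o p t h
      simp only [edges, List.mem_cons, List.mem_append, Prod.mk.injEq] at h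
      rcases h with ⟨hp, ht⟩ | h | h
      · exact ⟨0, by simp [RE.preForm], by omega, by simp [RE.preForm, Tok.isBin]⟩
      · obtain ⟨k, hk, hp, hs⟩ := ih₁ (o+1) p t h
        refine ⟨k+1, by simp [RE.preForm]; omega, by omega, ?_⟩
        simp only [RE.preForm, List.getElem_cons_succ]
        rw [List.getElem_append_left hk]
        exact hs
      · obtain ⟨k, hk, hp, hs⟩ := ih₂ (o+1+r₁.size) p t h
        have hlen : r₁.preForm.length = r₁.size := length_preForm r₁
        refine ⟨r₁.size + k + 1, by simp [RE.preForm]; omega, by omega, ?_⟩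
        simp only [RE.preForm, List.getElem_cons_succ]
        rw [List.getElem_append_right (by omega)]
        have he : (r₂.preForm[r₁.size + k - r₁.preForm.length]'(by
            omega)) = r₂.preForm[k] := by
          congr 1; omega
        rw [he]; exact hs

lemma edges_src_exists : ∀ (r : RE α) (o k : ℕ) (h : k < r.preForm.length),
    (r.preForm[k]).isBin = true → ∃ t, (o + k, t) ∈ edges r o := by
  intro r
  induction r with
  | sym a =>
      intro o k h hs
      simp only [RE.preForm, List.length_singleton] at h
      obtain rfl : k = 0 := by omega
      simp [RE.preForm, Tok.isBin] at hs
  | opt r ih | star r ih | plus r ih =>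
      intro o k h hs
      match k with
      | 0 => simp [RE.preForm, Tok.isBin] at hs
      | k'+1 =>
        simp only [RE.preForm, List.getElem_cons_succ] at hs
        simp only [RE.preForm, List.length_cons] at h
        obtain ⟨t, ht⟩ := ih (o+1) k' (by omega) hs
        refine ⟨t, ?_⟩
        have he : o + (k'+1) = o + 1 + k' := by omega
        rw [he]
        exact ht
  | cat r₁ r₂ ih₁ ih₂ | inter r₁ r₂ ih₁ ih₂ | alt r₁ r₂ ih₁ ih₂ =>
      intro o k h hs
      have hlen : r₁.preForm.length = r₁.size := length_preForm r₁
      have hlen₂ : r₂.preForm.length = r₂.size := length_preForm r₂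
      match k with
      | 0 => exact ⟨o + 1 + r₁.size, by simp [edges]⟩
      | k'+1 =>
        simp only [RE.preForm, List.getElem_cons_succ] at hs
        simp only [RE.preForm, List.length_cons, List.length_append] at h
        by_cases hc : k' < r₁.preForm.length
        · rw [List.getElem_append_left hc] at hs
          obtain ⟨t, ht⟩ := ih₁ (o+1) k' hc hs
          refine ⟨t, ?_⟩
          have he : o + (k'+1) = o + 1 + k' := by omega
          rw [he]
          simp only [edges, List.mem_cons, List.mem_append]
          exact Or.inr (Or.inl ht)
        · rw [List.getElem_append_right (by omega)] at hs
          obtain ⟨t, ht⟩ := ih₂ (o+1+r₁.size) (k' - r₁.preForm.length) (by omega) hs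
          refine ⟨t, ?_⟩
          have he : o + (k'+1) = o + 1 + r₁.size + (k' - r₁.preForm.length) := by omega
          rw [he]
          simp only [edges, List.mem_cons, List.mem_append]
          exact Or.inr (Or.inr ht)

lemma edges_src_unique : ∀ (r : RE α) (o p t₁ t₂ : ℕ),
    (p, t₁) ∈ edges r o → (p, t₂) ∈ edges r o → t₁ = t₂ := by
  intro r
  induction r with
  | sym a => intro o p t₁ t₂ h; simp [edges] at h
  | opt r ih | star r ih | plus r ih =>
      intro o p t₁ t₂ h₁ h₂; exact ih (o+1) p t₁ t₂ h₁ h₂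
  | cat r₁ r₂ ih₁ ih₂ | inter r₁ r₂ ih₁ ih₂ | alt r₁ r₂ ih₁ ih₂ =>
      intro o p t₁ t₂ h₁ h₂
      simp only [edges, List.mem_cons, List.mem_append, Prod.mk.injEq] at h₁ h₂
      rcases h₁ with ⟨hp₁, ht₁⟩ | h₁ | h₁ <;> rcases h₂ with ⟨hp₂, ht₂⟩ | h₂ | h₂
      · omega
      · have := edges_bounds r₁ (o+1) p t₂ h₂; omega
      · have := edges_bounds r₂ (o+1+r₁.size) p t₂ h₂; omega
      · have := edges_bounds r₁ (o+1) p t₁ h₁; omega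
      · exact ih₁ (o+1) p t₁ t₂ h₁ h₂
      · have := edges_bounds r₁ (o+1) p t₁ h₁
        have := edges_bounds r₂ (o+1+r₁.size) p t₂ h₂; omega
      · have := edges_bounds r₂ (o+1+r₁.size) p t₁ h₁; omega
      · have := edges_bounds r₂ (o+1+r₁.size) p t₁ h₁
        have := edges_bounds r₁ (o+1) p t₂ h₂; omega
      · exact ih₂ (o+1+r₁.size) p t₁ t₂ h₁ h₂

lemma edges_tgt_unique : ∀ (r : RE α) (o p₁ p₂ t : ℕ),
    (p₁, t) ∈ edges r o → (p₂, t) ∈ edges r o → p₁ = p₂ := by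
  intro r
  induction r with
  | sym a => intro o p₁ p₂ t h; simp [edges] at h
  | opt r ih | star r ih | plus r ih =>
      intro o p₁ p₂ t h₁ h₂; exact ih (o+1) p₁ p₂ t h₁ h₂
  | cat r₁ r₂ ih₁ ih₂ | inter r₁ r₂ ih₁ ih₂ | alt r₁ r₂ ih₁ ih₂ =>
      intro o p₁ p₂ t h₁ h₂
      simp only [edges, List.mem_cons, List.mem_append, Prod.mk.injEq] at h₁ h₂
      rcases h₁ with ⟨hp₁, ht₁⟩ | h₁ | h₁ <;> rcases h₂ with ⟨hp₂, ht₂⟩ | h₂ | h₂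
      · omega
      · have := edges_bounds r₁ (o+1) p₂ t h₂; omega
      · have := edges_bounds r₂ (o+1+r₁.size) p₂ t h₂; omega
      · have := edges_bounds r₁ (o+1) p₁ t h₁; omega
      · exact ih₁ (o+1) p₁ p₂ t h₁ h₂
      · have := edges_bounds r₁ (o+1) p₁ t h₁
        have := edges_bounds r₂ (o+1+r₁.size) p₂ t h₂; omega
      · have := edges_bounds r₂ (o+1+r₁.size) p₁ t h₁; omega
      · have := edges_bounds r₂ (o+1+r₁.size) p₁ t h₁
        have := edges_bounds r₁ (o+1) p₂ t h₂; omega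
      · exact ih₂ (o+1+r₁.size) p₁ p₂ t h₁ h₂

lemma edges_nest : ∀ (r : RE α) (o p t p' t' : ℕ),
    (p, t) ∈ edges r o → (p', t') ∈ edges r o → p < p' → p' < t → t' < t := by
  intro r
  induction r with
  | sym a => intro o p t p' t' h; simp [edges] at h
  | opt r ih | star r ih | plus r ih =>
      intro o p t p' t' h₁ h₂ hlt₁ hlt₂; exact ih (o+1) p t p' t' h₁ h₂ hlt₁ hlt₂
  | cat r₁ r₂ ih₁ ih₂ | inter r₁ r₂ ih₁ ih₂ | alt r₁ r₂ ih₁ ih₂ =>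
      intro o p t p' t' h₁ h₂ hlt₁ hlt₂
      simp only [edges, List.mem_cons, List.mem_append, Prod.mk.injEq] at h₁ h₂
      rcases h₁ with ⟨hp₁, ht₁⟩ | h₁ | h₁ <;> rcases h₂ with ⟨hp₂, ht₂⟩ | h₂ | h₂
      · omega
      · have := edges_bounds r₁ (o+1) p' t' h₂; omega
      · have := edges_bounds r₂ (o+1+r₁.size) p' t' h₂; omega
      · have := edges_bounds r₁ (o+1) p t h₁; omega
      · exact ih₁ (o+1) p t p' t' h₁ h₂ hlt₁ hlt₂
      · have := edges_bounds r₁ (o+1) p t h₁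
        have := edges_bounds r₂ (o+1+r₁.size) p' t' h₂; omega
      · have := edges_bounds r₂ (o+1+r₁.size) p t h₁; omega
      · have := edges_bounds r₂ (o+1+r₁.size) p t h₁
        have := edges_bounds r₁ (o+1) p' t' h₂; omega
      · exact ih₂ (o+1+r₁.size) p t p' t' h₁ h₂ hlt₁ hlt₂

lemma edges_tgt : ∀ (r : RE α) (o p t : ℕ), (p, t) ∈ edges r o →
    ∃ (k : ℕ) (h : k < r.preForm.length), t = o + k + 1 ∧ (r.preForm[k]).isSym = true := by
  intro r
  induction r with
  | sym a => intro o p t h; simp [edges] at h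
  | opt r ih | star r ih | plus r ih =>
      intro o p t h
      obtain ⟨k, hk, ht, hs⟩ := ih (o+1) p t h
      refine ⟨k+1, by simp [RE.preForm]; omega, by omega, ?_⟩
      simpa [RE.preForm] using hs
  | cat r₁ r₂ ih₁ ih₂ | inter r₁ r₂ ih₁ ih₂ | alt r₁ r₂ ih₁ ih₂ =>
      intro o p t h
      have hlen : r₁.preForm.length = r₁.size := length_preForm r₁
      have hpos : 0 < r₁.size := size_pos r₁
      simp only [edges, List.mem_cons, List.mem_append, Prod.mk.injEq] at h
      rcases h with ⟨hp, ht⟩ | h | h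
      · obtain ⟨hk₁, hs₁⟩ := last_isSym r₁ (r₁.size - 1) (by omega)
        refine ⟨r₁.size, by simp [RE.preForm]; omega, by omega, ?_⟩
        rw [getIdx (show r₁.size = (r₁.size - 1) + 1 by omega)]
        simp only [RE.preForm, List.getElem_cons_succ]
        rw [List.getElem_append_left (by omega)]
        exact hs₁
      · obtain ⟨k, hk, ht, hs⟩ := ih₁ (o+1) p t h
        refine ⟨k+1, by simp [RE.preForm]; omega, by omega, ?_⟩
        simp only [RE.preForm, List.getElem_cons_succ]
        rw [List.getElem_append_left hk]
        exact hs
      · obtain ⟨k, hk, ht, hs⟩ := ih₂ (o+1+r₁.size) p t h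
        refine ⟨r₁.size + k + 1, by simp [RE.preForm]; omega, by omega, ?_⟩
        simp only [RE.preForm, List.getElem_cons_succ]
        rw [List.getElem_append_right (by omega)]
        have he : (r₂.preForm[r₁.size + k - r₁.preForm.length]'(by
            omega)) = r₂.preForm[k] := by
          congr 1; omega
        rw [he]; exact hs

lemma edges_tgt_exists : ∀ (r : RE α) (o k : ℕ) (h : k < r.preForm.length),
    k + 1 < r.size → (r.preForm[k]).isSym = true → ∃ p, (p, o + k + 1) ∈ edges r o := by
  intro r
  induction r with
  | sym a =>
      intro o k h hk hs
      have : (RE.sym a).size = 1 := rfl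
      omega
  | opt r ih | star r ih | plus r ih =>
      intro o k h hk hs
      match k with
      | 0 => simp [RE.preForm, Tok.isSym] at hs
      | k'+1 =>
        simp only [RE.preForm, List.getElem_cons_succ] at hs
        simp only [RE.preForm, List.length_cons] at h
        simp only [size_opt, size_star, size_plus] at hk
        obtain ⟨p, hp⟩ := ih (o+1) k' (by omega) (by omega) hs
        refine ⟨p, ?_⟩
        have he : o + (k'+1) + 1 = o + 1 + k' + 1 := by omega
        rw [he]
        exact hp
  | cat r₁ r₂ ih₁ ih₂ | inter r₁ r₂ ih₁ ih₂ | alt r₁ r₂ ih₁ ih₂ =>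
      intro o k h hk hs
      have hlen : r₁.preForm.length = r₁.size := length_preForm r₁
      have hlen₂ : r₂.preForm.length = r₂.size := length_preForm r₂
      simp only [size_cat, size_inter, size_alt] at hk
      match k with
      | 0 => simp [RE.preForm, Tok.isSym] at hs
      | k'+1 =>
        simp only [RE.preForm, List.getElem_cons_succ] at hs
        simp only [RE.preForm, List.length_cons, List.length_append] at h
        by_cases hc : k' < r₁.preForm.length
        · rw [List.getElem_append_left hc] at hs
          by_cases hc2 : k' + 1 < r₁.size
          · obtain ⟨p, hp⟩ := ih₁ (o+1) k' hc hc2 hs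
            refine ⟨p, ?_⟩
            have he : o + (k'+1) + 1 = o + 1 + k' + 1 := by omega
            rw [he]
            simp only [edges, List.mem_cons, List.mem_append]
            exact Or.inr (Or.inl hp)
          · refine ⟨o, ?_⟩
            have he : o + (k'+1) + 1 = o + 1 + r₁.size := by omega
            rw [he]
            simp [edges]
        · rw [List.getElem_append_right (by omega)] at hs
          obtain ⟨p, hp⟩ := ih₂ (o+1+r₁.size) (k' - r₁.preForm.length) (by omega)
            (by omega) hs
          refine ⟨p, ?_⟩
          have he : o + (k'+1) + 1 = o + 1 + r₁.size + (k' - r₁.preForm.length) + 1 := by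
            omega
          rw [he]
          simp only [edges, List.mem_cons, List.mem_append]
          exact Or.inr (Or.inr hp)

lemma toB_ne_none (o : Tok α) : o.toB ≠ BSym.none := by
  cases o <;> simp [Tok.toB]

lemma mem_symList_of_mem_preForm {r : RE α} {a : α} (h : Tok.sym a ∈ r.preForm) :
    a ∈ r.symList := by
  induction r with
  | sym b => simp_all [RE.preForm, RE.symList]
  | opt r ih | star r ih | plus r ih =>
      simp only [RE.preForm, List.mem_cons] at h
      rcases h with h | h
      · exact absurd h (by simp)
      · exact ih h
  | cat r₁ r₂ ih₁ ih₂ | inter r₁ r₂ ih₁ ih₂ | alt r₁ r₂ ih₁ ih₂ =>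
      simp only [RE.preForm, List.mem_cons, List.mem_append] at h
      rcases h with h | h | h
      · exact absurd h (by simp)
      · exact List.mem_append_left _ (ih₁ h)
      · exact List.mem_append_right _ (ih₂ h)

lemma sym_pos_unique : ∀ (r : RE α), r.symList.Nodup → ∀ (a : α) (i j : ℕ)
    (hi : i < r.preForm.length) (hj : j < r.preForm.length),
    r.preForm[i] = Tok.sym a → r.preForm[j] = Tok.sym a → i = j := by
  intro r
  induction r with
  | sym b =>
      intro hn a i j hi hj h₁ h₂
      simp only [RE.preForm, List.length_singleton] at hi hj
      omega
  | opt r ih | star r ih | plus r ih =>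
      intro hn a i j hi hj h₁ h₂
      simp only [RE.symList] at hn
      match i, j with
      | 0, _ => simp [RE.preForm] at h₁
      | _+1, 0 => simp [RE.preForm] at h₂
      | i'+1, j'+1 =>
        simp only [RE.preForm, List.getElem_cons_succ] at h₁ h₂
        simp only [RE.preForm, List.length_cons] at hi hj
        have := ih hn a i' j' (by omega) (by omega) h₁ h₂
        omega
  | cat r₁ r₂ ih₁ ih₂ | inter r₁ r₂ ih₁ ih₂ | alt r₁ r₂ ih₁ ih₂ =>
      intro hn a i j hi hj h₁ h₂
      simp only [RE.symList, List.nodup_append] at hn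
      obtain ⟨hn₁, hn₂, hdisj⟩ := hn
      match i, j with
      | 0, _ => simp [RE.preForm] at h₁
      | _+1, 0 => simp [RE.preForm] at h₂
      | i'+1, j'+1 =>
        simp only [RE.preForm, List.getElem_cons_succ] at h₁ h₂
        simp only [RE.preForm, List.length_cons, List.length_append] at hi hj
        by_cases hci : i' < r₁.preForm.length <;> by_cases hcj : j' < r₁.preForm.length
        · rw [List.getElem_append_left hci] at h₁
          rw [List.getElem_append_left hcj] at h₂
          have := ih₁ hn₁ a i' j' hci hcj h₁ h₂
          omega
        · rw [List.getElem_append_left hci] at h₁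
          rw [List.getElem_append_right (by omega)] at h₂
          exact absurd rfl (hdisj _ (mem_symList_of_mem_preForm (h₁ ▸ List.getElem_mem _))
            _ (mem_symList_of_mem_preForm (h₂ ▸ List.getElem_mem _)))
        · rw [List.getElem_append_right (by omega)] at h₁
          rw [List.getElem_append_left hcj] at h₂
          exact absurd rfl (hdisj _ (mem_symList_of_mem_preForm (h₂ ▸ List.getElem_mem _))
            _ (mem_symList_of_mem_preForm (h₁ ▸ List.getElem_mem _)))
        · rw [List.getElem_append_right (by omega)] at h₁
          rw [List.getElem_append_right (by omega)] at h₂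
          have := ih₂ hn₂ a (i' - r₁.preForm.length) (j' - r₁.preForm.length)
            (by omega) (by omega) h₁ h₂
          omega

end SoireAux

/-- Proposition 2: every SOIRE of size at most `T` arises from some
faithful encoding with length `T`. -/
theorem soire_has_faithful_encoding {α : Type} [Fintype α] [DecidableEq α] {T : ℕ}
    (hT : 0 < T) (r : RE α) (hr : SOIRE r) (hsize : r.size ≤ T) :
    ∃ θ : Encoding α T, Faithful θ ∧ DecodesTo θ r.preForm := by
  classical
  open SoireAux in
  have hlen : r.preForm.length = r.size := rfl
  obtain ⟨W, hW⟩ : ∃ W : Fin T → BSym α → ℝ, W = fun (t : Fin T) (b : BSym α) =>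
      if h : (t : ℕ) < r.preForm.length then
        (if b = (r.preForm.get ⟨(t : ℕ), h⟩).toB then (1:ℝ) else 0)
      else (if b = BSym.none then (1:ℝ) else 0) := ⟨_, rfl⟩
  obtain ⟨U, hU⟩ : ∃ U : Fin T → Fin T → ℝ, U = fun (t t' : Fin T) =>
      if ((t : ℕ), (t' : ℕ)) ∈ edges r 0 then (1:ℝ) else 0 := ⟨_, rfl⟩
  have hW01 : ∀ t b, W t b = 0 ∨ W t b = 1 := by
    intro t b; simp only [hW]; split_ifs <;> simp
  have hU01 : ∀ t t', U t t' = 0 ∨ U t t' = 1 := by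
    intro t t'; simp only [hU]; split_ifs <;> simp
  have hUnn : ∀ t t', 0 ≤ U t t' := by
    intro t t'; rcases hU01 t t' with h | h <;> rw [h] <;> norm_num
  have hWlt : ∀ (t : Fin T) (h : (t : ℕ) < r.preForm.length) (b : BSym α),
      W t b = if b = (r.preForm.get ⟨(t : ℕ), h⟩).toB then 1 else 0 := by
    intro t h b; simp only [hW]; rw [dif_pos h]
  have hWge : ∀ (t : Fin T), r.preForm.length ≤ (t : ℕ) → ∀ b : BSym α,
      W t b = if b = BSym.none then 1 else 0 := by
    intro t h b; simp only [hW]; rw [dif_neg (by omega)]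
  have hUin : ∀ (t t' : Fin T), ((t : ℕ), (t' : ℕ)) ∈ edges r 0 → U t t' = 1 := by
    intro t t' h; simp only [hU]; rw [if_pos h]
  have hUni : ∀ (t t' : Fin T), ((t : ℕ), (t' : ℕ)) ∉ edges r 0 → U t t' = 0 := by
    intro t t' h; simp only [hU]; rw [if_neg h]
  -- row sums of U
  have hUrow1 : ∀ (p : Fin T) (t0 : ℕ), ((p : ℕ), t0) ∈ edges r 0 →
      (∑ t', U p t') = 1 := by
    intro p t0 h0
    have hb := edges_bounds r 0 _ _ h0
    have ht0T : t0 < T := by omega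
    rw [Finset.sum_eq_single (⟨t0, ht0T⟩ : Fin T)]
    · exact hUin p ⟨t0, ht0T⟩ h0
    · intro b _ hb'
      apply hUni
      intro hmem
      exact hb' (Fin.ext (edges_src_unique r 0 (p : ℕ) _ _ hmem h0))
    · intro hcon; exact absurd (Finset.mem_univ _) hcon
  have hUrow0 : ∀ (p : Fin T), (∀ t0, ((p : ℕ), t0) ∉ edges r 0) →
      (∑ t', U p t') = 0 := by
    intro p h
    exact Finset.sum_eq_zero fun b _ => hUni p b (h _)
  have hUrow_le : ∀ p : Fin T, (∑ t', U p t') ≤ 1 := by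
    intro p
    by_cases hex : ∃ t0, ((p : ℕ), t0) ∈ edges r 0
    · obtain ⟨t0, h0⟩ := hex; rw [hUrow1 p t0 h0]
    · push_neg at hex; rw [hUrow0 p hex]; norm_num
  -- column sums of U
  have hUcol1 : ∀ (t' : Fin T) (p0 : ℕ), (p0, (t' : ℕ)) ∈ edges r 0 →
      (∑ p, U p t') = 1 := by
    intro t' p0 h0
    have hb := edges_bounds r 0 _ _ h0
    have ht' := t'.isLt
    have hp0T : p0 < T := by omega
    rw [Finset.sum_eq_single (⟨p0, hp0T⟩ : Fin T)]
    · exact hUin ⟨p0, hp0T⟩ t' h0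
    · intro b _ hb'
      apply hUni
      intro hmem
      exact hb' (Fin.ext (edges_tgt_unique r 0 _ _ _ hmem h0))
    · intro hcon; exact absurd (Finset.mem_univ _) hcon
  have hUcol0 : ∀ (t' : Fin T), (∀ p0, (p0, (t' : ℕ)) ∉ edges r 0) →
      (∑ p, U p t') = 0 := by
    intro t' h
    exact Finset.sum_eq_zero fun b _ => hUni b t' (h _)
  -- row sum characterizations via the token
  have hnotbin : ∀ (t : Fin T) (ht : (t : ℕ) < r.preForm.length),
      (r.preForm.get ⟨(t : ℕ), ht⟩).isBin = false → (∑ t', U t t') = 0 := by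
    intro t ht hnb
    apply hUrow0
    intro t0 hmem
    obtain ⟨k, hk, hpk, hbin⟩ := edges_src r 0 _ _ hmem
    obtain rfl : k = (t : ℕ) := by omega
    have hg : r.preForm[(t : ℕ)]'hk = r.preForm.get ⟨(t : ℕ), ht⟩ := rfl
    rw [hg, hnb] at hbin
    exact Bool.noConfusion hbin
  have hbinrow : ∀ (t : Fin T) (ht : (t : ℕ) < r.preForm.length),
      (r.preForm.get ⟨(t : ℕ), ht⟩).isBin = true → (∑ t', U t t') = 1 := by
    intro t ht hb
    have hb' : (r.preForm[(t : ℕ)]'ht).isBin = true := hb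
    obtain ⟨t0, ht0⟩ := edges_src_exists r 0 (t : ℕ) ht hb'
    rw [Nat.zero_add] at ht0
    exact hUrow1 t t0 ht0
  -- the encoding
  have hmemW : ∀ t b, W t b ∈ Set.Icc (0:ℝ) 1 := by
    intro t b; rcases hW01 t b with h | h <;> rw [h] <;> constructor <;> norm_num
  have hmemU : ∀ t t', U t t' ∈ Set.Icc (0:ℝ) 1 := by
    intro t t'; rcases hU01 t t' with h | h <;> rw [h] <;> constructor <;> norm_num
  have hUzero : ∀ t t' : Fin T, (t' : ℕ) < (t : ℕ) + 2 → U t t' = 0 := by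
    intro t t' h
    apply hUni
    intro hmem
    have := edges_bounds r 0 _ _ hmem
    omega
  have c1 : ∀ t : Fin T, OneHotFn (W t) := by
    intro t
    by_cases ht : (t : ℕ) < r.preForm.length
    · exact ⟨(r.preForm.get ⟨(t : ℕ), ht⟩).toB,
        by rw [hWlt t ht]; simp,
        fun b' hb' => by rw [hWlt t ht]; exact if_neg hb'⟩
    · exact ⟨BSym.none,
        by rw [hWge t (Nat.le_of_not_lt ht)]; simp,
        fun b' hb' => by rw [hWge t (Nat.le_of_not_lt ht)]; exact if_neg hb'⟩
  have c2 : ∀ t : Fin T, (∀ t', U t t' = 0) ∨ OneHotFn (U t) := by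
    intro t
    by_cases hex : ∃ t0, ((t : ℕ), t0) ∈ edges r 0
    · obtain ⟨t0, h0⟩ := hex
      have hb := edges_bounds r 0 _ _ h0
      have ht0T : t0 < T := by omega
      right
      refine ⟨⟨t0, ht0T⟩, hUin _ _ h0, ?_⟩
      intro b' hb'
      apply hUni
      intro hmem
      exact hb' (Fin.ext (edges_src_unique r 0 _ _ _ hmem h0))
    · left
      intro t'
      apply hUni
      intro hmem
      exact hex ⟨(t' : ℕ), hmem⟩
  have c3 : ∀ t : Fin T, (∑ t', U t t') +
      ((∑ a : α, W t (BSym.sym a)) + W t BSym.opt + W t BSym.star +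
        W t BSym.plus + W t BSym.none) = 1 := by
    intro t
    by_cases ht : (t : ℕ) < r.preForm.length
    · cases htok : r.preForm.get ⟨(t : ℕ), ht⟩ with
      | sym a =>
          rw [hnotbin t ht (by rw [htok]; rfl)]
          have h1 : (∑ a' : α, W t (BSym.sym a')) = 1 := by
            have hterm : ∀ a' : α, W t (BSym.sym a') = if a' = a then 1 else 0 := by
              intro a'; rw [hWlt t ht, htok]; simp [Tok.toB]
            rw [Finset.sum_congr rfl fun a' _ => hterm a']
            simp
          rw [h1]
          simp only [List.get_eq_getElem] at htok
          simp [hWlt t ht, htok, Tok.toB]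
      | opt | star | plus =>
          rw [hnotbin t ht (by rw [htok]; rfl)]
          have h1 : (∑ a' : α, W t (BSym.sym a')) = 0 :=
            Finset.sum_eq_zero fun a' _ => by rw [hWlt t ht, htok]; simp [Tok.toB]
          rw [h1]
          simp only [List.get_eq_getElem] at htok
          simp [hWlt t ht, htok, Tok.toB]
      | cat | inter | alt =>
          rw [hbinrow t ht (by rw [htok]; rfl)]
          have h1 : (∑ a' : α, W t (BSym.sym a')) = 0 :=
            Finset.sum_eq_zero fun a' _ => by rw [hWlt t ht, htok]; simp [Tok.toB]
          rw [h1]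
          simp only [List.get_eq_getElem] at htok
          simp [hWlt t ht, htok, Tok.toB]
    · have hge := Nat.le_of_not_lt ht
      have hrow : (∑ t', U t t') = 0 := by
        apply hUrow0
        intro t0 hmem
        have := edges_bounds r 0 _ _ hmem
        omega
      have h1 : (∑ a' : α, W t (BSym.sym a')) = 0 :=
        Finset.sum_eq_zero fun a' _ => by rw [hWge t hge]; simp
      rw [hrow, h1]
      simp [hWge t hge]
  have c4 : ∀ t t' : Fin T, (t : ℕ) + 1 = (t' : ℕ) →
      W t BSym.none ≤ W t' BSym.none := by
    intro t t' htt
    by_cases h2 : (t' : ℕ) < r.preForm.length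
    · have h1 : (t : ℕ) < r.preForm.length := by omega
      rw [hWlt t h1, hWlt t' h2,
        if_neg (Ne.symm (toB_ne_none _)), if_neg (Ne.symm (toB_ne_none _))]
    · rw [hWge t' (Nat.le_of_not_lt h2), if_pos rfl]
      rcases hW01 t BSym.none with h | h <;> rw [h] <;> norm_num
  have c5 : ∀ t t' : Fin T, (t : ℕ) + 1 = (t' : ℕ) →
      (W t BSym.opt + W t BSym.plus + W t BSym.star +
        W t BSym.cat + W t BSym.inter + W t BSym.alt) +
      (∑ p, U p t') + W t' BSym.none = 1 := by
    intro t t' htt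
    by_cases h2 : (t' : ℕ) < r.preForm.length
    · have h1 : (t : ℕ) < r.preForm.length := by omega
      have hC : W t' BSym.none = 0 := by
        rw [hWlt t' h2]; exact if_neg (Ne.symm (toB_ne_none _))
      rw [hC]
      cases htok : r.preForm.get ⟨(t : ℕ), h1⟩ with
      | sym a =>
          have hs : (r.preForm[(t : ℕ)]'h1).isSym = true := by
            have hg : r.preForm[(t : ℕ)]'h1 = r.preForm.get ⟨(t : ℕ), h1⟩ := rfl
            rw [hg, htok]; rfl
          obtain ⟨p0, hp0⟩ := edges_tgt_exists r 0 (t : ℕ) h1 (by omega) hs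
          have he : 0 + (t : ℕ) + 1 = (t' : ℕ) := by omega
          rw [he] at hp0
          rw [hUcol1 t' p0 hp0]
          simp only [List.get_eq_getElem] at htok
          simp [hWlt t h1, htok, Tok.toB]
      | opt | star | plus | cat | inter | alt =>
          have hcol : (∑ p, U p t') = 0 := by
            apply hUcol0
            intro p0 hmem
            obtain ⟨k, hk, hte, hs⟩ := edges_tgt r 0 _ _ hmem
            obtain rfl : k = (t : ℕ) := by omega
            have hg : r.preForm[(t : ℕ)]'hk = r.preForm.get ⟨(t : ℕ), h1⟩ := rfl
            rw [hg, htok] at hs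
            exact Bool.noConfusion hs
          rw [hcol]
          simp only [List.get_eq_getElem] at htok
          simp [hWlt t h1, htok, Tok.toB]
    · have hge := Nat.le_of_not_lt h2
      have hC : W t' BSym.none = 1 := by rw [hWge t' hge]; simp
      have hcol : (∑ p, U p t') = 0 := by
        apply hUcol0
        intro p0 hmem
        have := edges_bounds r 0 _ _ hmem
        omega
      rw [hC, hcol]
      by_cases h1 : (t : ℕ) < r.preForm.length
      · have hl : (t : ℕ) + 1 = r.size := by omega
        obtain ⟨hk, hs⟩ := last_isSym r (t : ℕ) hl
        have hget : (r.preForm.get ⟨(t : ℕ), h1⟩).isSym = true := hs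
        simp only [hWlt t h1]
        cases htok : r.preForm.get ⟨(t : ℕ), h1⟩ with
        | sym a => simp [Tok.toB]
        | opt | star | plus | cat | inter | alt =>
            rw [htok] at hget
            exact Bool.noConfusion hget
      · simp [hWge t (Nat.le_of_not_lt h1)]
  have c6 : ∀ t p : Fin T, (p : ℕ) + 2 ≤ (t : ℕ) →
      (((t : ℕ) : ℝ) - ((p : ℕ) : ℝ) - 1) * U p t +
        ∑ p' ∈ Finset.univ.filter (fun p' : Fin T => (p : ℕ) < (p' : ℕ) ∧ (p' : ℕ) < (t : ℕ)),
          ∑ t' ∈ Finset.univ.filter (fun t' : Fin T => (t : ℕ) < (t' : ℕ)), U p' t'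
        ≤ ((t : ℕ) : ℝ) - ((p : ℕ) : ℝ) - 1 := by
    intro t p hpt
    by_cases he : ((p : ℕ), (t : ℕ)) ∈ edges r 0
    · have hS : ∀ p' ∈ Finset.univ.filter
          (fun p' : Fin T => (p : ℕ) < (p' : ℕ) ∧ (p' : ℕ) < (t : ℕ)),
          (∑ t' ∈ Finset.univ.filter (fun t' : Fin T => (t : ℕ) < (t' : ℕ)), U p' t') = 0 := by
        intro p' hp'
        simp only [Finset.mem_filter, Finset.mem_univ, true_and] at hp'
        apply Finset.sum_eq_zero
        intro t' ht'
        simp only [Finset.mem_filter, Finset.mem_univ, true_and] at ht'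
        apply hUni
        intro hmem
        have := edges_nest r 0 _ _ _ _ he hmem hp'.1 hp'.2
        omega
      rw [Finset.sum_eq_zero hS, hUin _ _ he]
      simp
    · rw [hUni _ _ he, mul_zero, zero_add]
      have hb : ∀ p' : Fin T,
          (∑ t' ∈ Finset.univ.filter (fun t' : Fin T => (t : ℕ) < (t' : ℕ)), U p' t') ≤ 1 := by
        intro p'
        calc (∑ t' ∈ Finset.univ.filter (fun t' : Fin T => (t : ℕ) < (t' : ℕ)), U p' t')
            ≤ ∑ t' : Fin T, U p' t' :=
              Finset.sum_le_sum_of_subset_of_nonneg (Finset.filter_subset _ _)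
                (fun i _ _ => hUnn p' i)
          _ ≤ 1 := hUrow_le p'
      have hfeq : Finset.univ.filter
          (fun p' : Fin T => (p : ℕ) < (p' : ℕ) ∧ (p' : ℕ) < (t : ℕ)) = Finset.Ioo p t := by
        ext x
        simp only [Finset.mem_filter, Finset.mem_univ, true_and, Finset.mem_Ioo]
        rw [Fin.lt_def, Fin.lt_def]
      have hcard : (Finset.univ.filter
          (fun p' : Fin T => (p : ℕ) < (p' : ℕ) ∧ (p' : ℕ) < (t : ℕ))).card
          = (t : ℕ) - (p : ℕ) - 1 := by
        rw [hfeq, Fin.card_Ioo]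
      calc (∑ p' ∈ Finset.univ.filter
            (fun p' : Fin T => (p : ℕ) < (p' : ℕ) ∧ (p' : ℕ) < (t : ℕ)),
            ∑ t' ∈ Finset.univ.filter (fun t' : Fin T => (t : ℕ) < (t' : ℕ)), U p' t')
          ≤ ∑ p' ∈ Finset.univ.filter
            (fun p' : Fin T => (p : ℕ) < (p' : ℕ) ∧ (p' : ℕ) < (t : ℕ)), (1:ℝ) :=
            Finset.sum_le_sum fun p' _ => hb p'
        _ = ((t : ℕ) - (p : ℕ) - 1 : ℕ) := by rw [Finset.sum_const, hcard]; simp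
        _ ≤ ((t : ℕ) : ℝ) - ((p : ℕ) : ℝ) - 1 := by
            rw [Nat.cast_sub (by omega : 1 ≤ (t : ℕ) - (p : ℕ)),
              Nat.cast_sub (by omega : (p : ℕ) ≤ (t : ℕ)), Nat.cast_one]
  have c7 : ∀ a : α, (∑ t, W t (BSym.sym a)) ≤ 1 := by
    intro a
    have hWs : ∀ t : Fin T, W t (BSym.sym a) ≠ 0 →
        ∃ h : (t : ℕ) < r.preForm.length, r.preForm[(t : ℕ)]'h = Tok.sym a := by
      intro t hne
      by_cases ht : (t : ℕ) < r.preForm.length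
      · refine ⟨ht, ?_⟩
        rw [hWlt t ht] at hne
        by_cases hcond : BSym.sym a = (r.preForm.get ⟨(t : ℕ), ht⟩).toB
        · have hg : r.preForm[(t : ℕ)]'ht = r.preForm.get ⟨(t : ℕ), ht⟩ := rfl
          rw [hg]
          cases hg2 : r.preForm.get ⟨(t : ℕ), ht⟩ with
          | sym b => rw [hg2] at hcond; simp [Tok.toB] at hcond; rw [hcond]
          | opt | star | plus | cat | inter | alt =>
              rw [hg2] at hcond; simp [Tok.toB] at hcond
        · rw [if_neg hcond] at hne; exact absurd rfl hne
      · rw [hWge t (Nat.le_of_not_lt ht), if_neg (by simp)] at hne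
        exact absurd rfl hne
    by_cases hex : ∃ t : Fin T, W t (BSym.sym a) ≠ 0
    · obtain ⟨t0, ht0⟩ := hex
      obtain ⟨h01, h02⟩ := hWs t0 ht0
      calc (∑ t, W t (BSym.sym a)) = W t0 (BSym.sym a) := by
            apply Finset.sum_eq_single
            · intro b _ hbne
              by_contra hbz
              obtain ⟨hb1, hb2⟩ := hWs b hbz
              exact hbne (Fin.ext (sym_pos_unique r hr a _ _ hb1 h01 hb2 h02))
            · intro h; exact absurd (Finset.mem_univ _) h
        _ ≤ 1 := by rcases hW01 t0 (BSym.sym a) with h | h <;> rw [h] <;> norm_num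
    · push_neg at hex
      rw [Finset.sum_eq_zero fun t _ => hex t]
      norm_num
  have d2 : ∀ (t : Fin T) (h : (t : ℕ) < r.preForm.length),
      W t (r.preForm.get ⟨(t : ℕ), h⟩).toB = 1 := by
    intro t h
    rw [hWlt t h]
    simp
  have d3 : ∀ t : Fin T, r.preForm.length ≤ (t : ℕ) → W t BSym.none = 1 := by
    intro t h
    rw [hWge t h]
    simp
  exact ⟨⟨W, U, hmemW, hmemU, hUzero⟩, ⟨c1, c2, c3, c4, c5, c6, c7⟩, hsize, d2, d3⟩
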